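/- Let ω > 0 and let S be uniformly distributed on [0,1]. Define Γ^sin(t; S, ω) = (πω/2) sin(πS) [R₄(t; S, ω) − R₄(t − π/ω; S, ω)]. Then for every t ∈ [0, 2π/ω], 𝔼_S[Γ^sin(t; S, ω)] = sin(ωt), and for every t ∉ [0, 2π/ω], 𝔼_S[Γ^sin(t; S, ω)] = 0. -/

import Mathlib

open Real
open scoped BigOperators

/-- `ReLU(t) = max(0, t)`. -/
noncomputable def relu (t : ℝ) : ℝ := max 0 t

/-- `R₄(t; S, ω) = ReLU(t) + ReLU(t - π/ω) - ReLU(t - πS/ω) - ReLU(t - π(1-S)/ω)`. -/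
noncomputable def R4 (ω S t : ℝ) : ℝ :=
  relu t + relu (t - π / ω) - relu (t - π * S / ω) - relu (t - π * (1 - S) / ω)

/-- `Γ^sin(t; S, ω) = (πω/2) sin(πS) [R₄(t; S, ω) - R₄(t - π/ω; S, ω)]`. -/
noncomputable def gammaSin (ω S t : ℝ) : ℝ :=
  π * ω / 2 * Real.sin (π * S) * (R4 ω S t - R4 ω S (t - π / ω))

/-- `Γ^cos_n(t; S, ω) = Σ_{i=-n-1}^{n} Γ^sin(t - 2πi/ω + π/(2ω); S, ω)`. -/
noncomputable def gammaCos (n : ℕ) (ω S t : ℝ) : ℝ :=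
  ∑ i ∈ Finset.Icc (-(n : ℤ) - 1) (n : ℤ),
    gammaSin ω S (t - 2 * π * (i : ℝ) / ω + π / (2 * ω))

@[fun_prop] lemma continuous_relu : Continuous relu := continuous_const.max continuous_id

lemma integral_sin_mul_linear (c d a b : ℝ) :
    ∫ S in a..b, Real.sin (π * S) * (c + d * S) =
      (-Real.cos (π * b) * (c + d * b) / π + d * Real.sin (π * b) / π ^ 2)
      - (-Real.cos (π * a) * (c + d * a) / π + d * Real.sin (π * a) / π ^ 2) := by
  have hπ : (π : ℝ) ≠ 0 := Real.pi_ne_zero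
  apply intervalIntegral.integral_eq_sub_of_hasDerivAt
  · intro x _
    have h1 : HasDerivAt (fun S : ℝ => π * S) π x := by
      simpa using (hasDerivAt_id x).const_mul π
    have hcos : HasDerivAt (fun S => Real.cos (π * S)) (-Real.sin (π * x) * π) x :=
      (Real.hasDerivAt_cos (π * x)).comp x h1
    have hsin : HasDerivAt (fun S => Real.sin (π * S)) (Real.cos (π * x) * π) x :=
      (Real.hasDerivAt_sin (π * x)).comp x h1
    have hlin : HasDerivAt (fun S : ℝ => c + d * S) d x := by
      simpa using ((hasDerivAt_id x).const_mul d).const_add c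
    have := ((hcos.neg.mul hlin).div_const π).add ((hsin.const_mul d).div_const (π ^ 2))
    convert this using 1
    · funext y
      simp only [Pi.add_apply, Pi.mul_apply, Pi.neg_apply]
    · simp only [Pi.neg_apply]
      field_simp
      ring
  · apply Continuous.intervalIntegrable
    fun_prop

lemma Hintegrable (ω c : ℝ) (a b : ℝ) :
    IntervalIntegrable (fun S => Real.sin (π * S) * relu (c - π * S / ω))
      MeasureTheory.volume a b := by
  apply Continuous.intervalIntegrable
  fun_prop

lemma Hval (ω : ℝ) (hω : 0 < ω) (t : ℝ) :
    ∫ S in (0:ℝ)..1, Real.sin (π * S) * relu (t - π * S / ω) =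
      if t ≤ 0 then 0 else if t ≤ π / ω then t / π - Real.sin (ω * t) / (π * ω)
      else 2 * t / π - 1 / ω := by
  have hπ : (0:ℝ) < π := Real.pi_pos
  by_cases h0 : t ≤ 0
  · rw [if_pos h0]
    rw [intervalIntegral.integral_congr (g := fun _ => (0:ℝ))]
    · simp
    · intro S hS
      rw [Set.uIcc_of_le (by norm_num)] at hS
      have : t - π * S / ω ≤ 0 := by
        have : 0 ≤ π * S / ω := div_nonneg (by nlinarith [hS.1, Real.pi_pos]) hω.le
        linarith
      simp [relu, max_eq_left this]
  · rw [if_neg h0]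
    push_neg at h0
    by_cases h1 : t ≤ π / ω
    · rw [if_pos h1]
      set a : ℝ := ω * t / π with ha
      have ha0 : 0 ≤ a := div_nonneg (by nlinarith) hπ.le
      have ha1 : a ≤ 1 := by
        rw [ha, div_le_one hπ]
        calc ω * t ≤ ω * (π / ω) := by nlinarith
        _ = π := by field_simp
      have key : π * a = ω * t := by rw [ha]; field_simp
      rw [← intervalIntegral.integral_add_adjacent_intervals (a := (0:ℝ)) (b := a) (c := 1)
        (Hintegrable ω t 0 a) (Hintegrable ω t a 1)]
      have e1 : ∫ S in (0:ℝ)..a, Real.sin (π * S) * relu (t - π * S / ω)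
          = ∫ S in (0:ℝ)..a, Real.sin (π * S) * (t + (-(π/ω)) * S) := by
        apply intervalIntegral.integral_congr
        intro S hS
        rw [Set.uIcc_of_le ha0] at hS
        have hge : 0 ≤ t - π * S / ω := by
          have : π * S ≤ π * a := by nlinarith [hS.2]
          rw [key] at this
          rw [sub_nonneg, div_le_iff₀ hω]
          nlinarith
        simp only [relu, max_eq_right hge]
        ring
      have e2 : ∫ S in a..(1:ℝ), Real.sin (π * S) * relu (t - π * S / ω)
          = ∫ S in a..(1:ℝ), (0:ℝ) := by
        apply intervalIntegral.integral_congr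
        intro S hS
        rw [Set.uIcc_of_le ha1] at hS
        have hle : t - π * S / ω ≤ 0 := by
          have : π * a ≤ π * S := by nlinarith [hS.1]
          rw [key] at this
          rw [sub_nonpos, le_div_iff₀ hω]
          nlinarith
        simp [relu, max_eq_left hle]
      rw [e1, e2, integral_sin_mul_linear]
      have harg : t + -(π/ω) * a = 0 := by
        rw [ha]; field_simp; ring
      rw [key, harg]
      simp [Real.cos_zero, Real.sin_zero]
      field_simp
      ring
    · rw [if_neg h1]
      push_neg at h1
      have e1 : ∫ S in (0:ℝ)..1, Real.sin (π * S) * relu (t - π * S / ω)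
          = ∫ S in (0:ℝ)..1, Real.sin (π * S) * (t + (-(π/ω)) * S) := by
        apply intervalIntegral.integral_congr
        intro S hS
        rw [Set.uIcc_of_le (by norm_num)] at hS
        have hge : 0 ≤ t - π * S / ω := by
          have h2 : π * S / ω ≤ π / ω := by
            have : π * S ≤ π := by nlinarith [hS.2]
            exact (div_le_div_iff_of_pos_right hω).mpr this
          linarith
        simp only [relu, max_eq_right hge]
        ring
      rw [e1, integral_sin_mul_linear]
      simp [Real.cos_pi, Real.sin_pi, Real.cos_zero, Real.sin_zero]
      field_simp
      ring

lemma Hsym (ω t : ℝ) :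
    ∫ S in (0:ℝ)..1, Real.sin (π * S) * relu (t - π * (1 - S) / ω) =
    ∫ S in (0:ℝ)..1, Real.sin (π * S) * relu (t - π * S / ω) := by
  have h := intervalIntegral.integral_comp_sub_left (a := (0:ℝ)) (b := 1)
    (fun S => Real.sin (π * S) * relu (t - π * S / ω)) 1
  simp only [sub_zero, sub_self] at h
  rw [← h]
  apply intervalIntegral.integral_congr
  intro S hS
  simp only
  rw [show π * (1 - S) = π - π * S by ring, Real.sin_pi_sub]

lemma integral_sin_pi : ∫ S in (0:ℝ)..1, Real.sin (π * S) = 2 / π := by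
  have hπ : (π : ℝ) ≠ 0 := Real.pi_ne_zero
  rw [intervalIntegral.integral_comp_mul_left (fun x => Real.sin x) hπ]
  simp [Real.cos_pi]
  field_simp
  ring

lemma integral_gammaSin (ω : ℝ) (t : ℝ) :
    ∫ S in (0:ℝ)..1, gammaSin ω S t =
      (π * ω / 2 * (relu t - relu (t - π / ω - π / ω))) * (∫ S in (0:ℝ)..1, Real.sin (π * S))
      - π * ω / 2 * (∫ S in (0:ℝ)..1, Real.sin (π * S) * relu (t - π * S / ω))
      - π * ω / 2 * (∫ S in (0:ℝ)..1, Real.sin (π * S) * relu (t - π * (1 - S) / ω))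
      + π * ω / 2 * (∫ S in (0:ℝ)..1, Real.sin (π * S) * relu (t - π / ω - π * S / ω))
      + π * ω / 2 * (∫ S in (0:ℝ)..1, Real.sin (π * S) * relu (t - π / ω - π * (1 - S) / ω)) := by
  have expand : Set.EqOn (fun S => gammaSin ω S t)
      (fun S => (π * ω / 2 * (relu t - relu (t - π / ω - π / ω))) * Real.sin (π * S)
        - π * ω / 2 * (Real.sin (π * S) * relu (t - π * S / ω))
        - π * ω / 2 * (Real.sin (π * S) * relu (t - π * (1 - S) / ω))
        + π * ω / 2 * (Real.sin (π * S) * relu (t - π / ω - π * S / ω))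
        + π * ω / 2 * (Real.sin (π * S) * relu (t - π / ω - π * (1 - S) / ω)))
      (Set.uIcc 0 1) := by
    intro S _
    simp only [gammaSin, R4]
    ring
  rw [intervalIntegral.integral_congr expand]
  rw [intervalIntegral.integral_add (by apply Continuous.intervalIntegrable; fun_prop)
        (by apply Continuous.intervalIntegrable; fun_prop),
      intervalIntegral.integral_add (by apply Continuous.intervalIntegrable; fun_prop)
        (by apply Continuous.intervalIntegrable; fun_prop),
      intervalIntegral.integral_sub (by apply Continuous.intervalIntegrable; fun_prop)
        (by apply Continuous.intervalIntegrable; fun_prop),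
      intervalIntegral.integral_sub (by apply Continuous.intervalIntegrable; fun_prop)
        (by apply Continuous.intervalIntegrable; fun_prop),
      intervalIntegral.integral_const_mul, intervalIntegral.integral_const_mul,
      intervalIntegral.integral_const_mul, intervalIntegral.integral_const_mul,
      intervalIntegral.integral_const_mul]

/-- **Unbiasedness of the random ReLU estimator for sine.** With `S ~ Unif[0,1]`,
`𝔼_S[Γ^sin(t; S, ω)] = sin(ωt)` for `t ∈ [0, 2π/ω]`, and `𝔼_S[Γ^sin(t; S, ω)] = 0` for
`t ∉ [0, 2π/ω]`. -/
theorem gammaSin_expectation (ω : ℝ) (hω : 0 < ω) :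
    (∀ t ∈ Set.Icc (0 : ℝ) (2 * π / ω),
      ∫ S in (0 : ℝ)..1, gammaSin ω S t = Real.sin (ω * t)) ∧
    (∀ t : ℝ, t ∉ Set.Icc (0 : ℝ) (2 * π / ω) →
      ∫ S in (0 : ℝ)..1, gammaSin ω S t = 0) := by
  have hπ : (0:ℝ) < π := Real.pi_pos
  have hπω : (0:ℝ) < π / ω := div_pos hπ hω
  have h2 : π / ω + π / ω = 2 * π / ω := by ring
  have key : ∀ t : ℝ, ∫ S in (0:ℝ)..1, gammaSin ω S t =
      ω * (relu t - relu (t - π / ω - π / ω))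
      - π * ω * (if t ≤ 0 then 0 else if t ≤ π / ω then
          t / π - Real.sin (ω * t) / (π * ω) else 2 * t / π - 1 / ω)
      + π * ω * (if t - π / ω ≤ 0 then 0 else if t - π / ω ≤ π / ω then
          (t - π / ω) / π - Real.sin (ω * (t - π / ω)) / (π * ω)
          else 2 * (t - π / ω) / π - 1 / ω) := by
    intro t
    rw [integral_gammaSin, Hsym, Hsym, Hval ω hω, Hval ω hω, integral_sin_pi]
    generalize (if t ≤ 0 then (0:ℝ) else if t ≤ π / ω then
          t / π - Real.sin (ω * t) / (π * ω) else 2 * t / π - 1 / ω) = X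
    generalize (if t - π / ω ≤ 0 then (0:ℝ) else if t - π / ω ≤ π / ω then
          (t - π / ω) / π - Real.sin (ω * (t - π / ω)) / (π * ω)
          else 2 * (t - π / ω) / π - 1 / ω) = Y
    have hπ' : (π:ℝ) ≠ 0 := Real.pi_ne_zero
    field_simp
    ring
  constructor
  · rintro t ⟨ht0, ht2⟩
    rw [key t]
    rcases eq_or_lt_of_le ht0 with h | h
    · rw [← h]
      have hr0 : relu 0 = 0 := by simp [relu]
      have hr1 : relu (0 - π / ω - π / ω) = 0 := max_eq_left (by linarith)
      rw [if_pos le_rfl, if_pos (by linarith : (0:ℝ) - π / ω ≤ 0), hr0, hr1]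
      norm_num
    · have hrt : relu t = t := max_eq_right (le_of_lt h)
      have hrt2 : relu (t - π / ω - π / ω) = 0 := max_eq_left (by linarith)
      rw [hrt, hrt2, if_neg (not_le.mpr h)]
      by_cases h1 : t ≤ π / ω
      · rw [if_pos h1, if_pos (by linarith : t - π / ω ≤ 0)]
        field_simp
        ring
      · push_neg at h1
        rw [if_neg (not_le.mpr h1), if_neg (not_le.mpr (by linarith : (0:ℝ) < t - π / ω)),
          if_pos (by linarith : t - π / ω ≤ π / ω)]
        have hsin : Real.sin (ω * (t - π / ω)) = -Real.sin (ω * t) := by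
          rw [show ω * (t - π / ω) = ω * t - π by field_simp, Real.sin_sub_pi]
        rw [hsin]
        field_simp
        ring
  · intro t ht
    rw [Set.mem_Icc, not_and_or, not_le, not_le] at ht
    rw [key t]
    rcases ht with h | h
    · have hrt : relu t = 0 := max_eq_left (le_of_lt h)
      have hrt2 : relu (t - π / ω - π / ω) = 0 := max_eq_left (by linarith)
      rw [hrt, hrt2, if_pos (le_of_lt h), if_pos (by linarith : t - π / ω ≤ 0)]
      ring
    · have hrt : relu t = t := max_eq_right (by linarith)
      have hrt2 : relu (t - π / ω - π / ω) = t - π / ω - π / ω :=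
        max_eq_right (by linarith)
      rw [hrt, hrt2, if_neg (by push_neg; linarith : ¬ t ≤ 0),
        if_neg (by push_neg; linarith : ¬ t ≤ π / ω),
        if_neg (by push_neg; linarith : ¬ t - π / ω ≤ 0),
        if_neg (by push_neg; linarith : ¬ t - π / ω ≤ π / ω)]
      field_simp
      ring
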